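/- For any hereditary, spreading, compact family F of finite subsets of ℕ considered as a tree on ℕ (via strictly increasing enumerations), the tree order o(F) equals the Cantor–Bendixson index ι(F). -/

import Mathlib

/-- A family of finite subsets of `ℕ` is *hereditary* if it is closed under subsets. -/
def IsHereditary (𝒜 : Set (Finset ℕ)) : Prop :=
  ∀ F ∈ 𝒜, ∀ G : Finset ℕ, G ⊆ F → G ∈ 𝒜

/-- A family of finite subsets of `ℕ` is *spreading* if any member stays in the family after
replacing its elements by larger ones, keeping the strict order. -/
def IsSpreading (𝒜 : Set (Finset ℕ)) : Prop :=
  ∀ F ∈ 𝒜, ∀ f : ℕ → ℕ,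
    (∀ p ∈ F, ∀ q ∈ F, p < q → f p < f q) → (∀ p ∈ F, p ≤ f p) →
      F.image f ∈ 𝒜

/-- The image of a family of finite sets in the Cantor space `2^ℕ` (product topology),
identifying a finite set with its characteristic function. -/
def charImage (𝒜 : Set (Finset ℕ)) : Set (ℕ → Bool) :=
  (fun (F : Finset ℕ) (n : ℕ) => decide (n ∈ F)) '' 𝒜

/-- A tree on `S`: a set of nonempty finite sequences closed under nonempty initial segments. -/
def IsTree {S : Type*} (T : Set (List S)) : Prop :=
  [] ∉ T ∧ ∀ (l : List S) (x : S), l ++ [x] ∈ T → l ≠ [] → l ∈ T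

/-- A tree is well-founded if it has no infinite branch. -/
def WellFoundedTree {S : Type*} (T : Set (List S)) : Prop :=
  ¬ ∃ f : ℕ → S, ∀ k : ℕ, (List.ofFn fun i : Fin (k + 1) => f i) ∈ T

/-- The derived tree `D(T) = {(x₁,...,x_k) : (x₁,...,x_k,x) ∈ T for some x}`. -/
def Dtree {S : Type*} (T : Set (List S)) : Set (List S) :=
  { l | l ≠ [] ∧ ∃ x : S, l ++ [x] ∈ T }

/-- Transfinite iteration of the tree derivative. -/
noncomputable def DIter {S : Type*} (T : Set (List S)) (o : Ordinal) : Set (List S) :=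
  Ordinal.limitRecOn o T (fun _ ih => Dtree ih)
    (fun o _ ih => ⋂ (o' : Ordinal), ⋂ (h : o' < o), ih o' h)

/-- The order of a tree: `o(T) = inf {α : D^α(T) = ∅}`. -/
noncomputable def treeOrder {S : Type*} (T : Set (List S)) : Ordinal :=
  sInf { α : Ordinal | DIter T α = ∅ }

/-- Transfinitely iterated Cantor–Bendixson derivative of a subset of the Cantor space
`2^ℕ`: at each step keep only the limit points, at limit stages take intersections. -/
noncomputable def CBIter (A : Set (ℕ → Bool)) (o : Ordinal) : Set (ℕ → Bool) :=
  Ordinal.limitRecOn o A (fun _ ih => { x | x ∈ closure (ih \ {x}) })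
    (fun o _ ih => ⋂ (o' : Ordinal), ⋂ (h : o' < o), ih o' h)

/-- The Cantor–Bendixson index `ι(A) = inf {α : A^{(α+1)} = ∅}`. -/
noncomputable def CBIndex (A : Set (ℕ → Bool)) : Ordinal :=
  sInf { α : Ordinal | CBIter A (α + 1) = ∅ }

/-- The tree on `ℕ` associated to a family of finite subsets of `ℕ`, via strictly
increasing enumerations of its nonempty members. -/
def familyTree (𝒜 : Set (Finset ℕ)) : Set (List ℕ) :=
  { l | l ≠ [] ∧ l.Chain' (· < ·) ∧ l.toFinset ∈ 𝒜 }
noncomputable section Aux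

/-- characteristic function -/
def chf (F : Finset ℕ) : ℕ → Bool := fun n => decide (n ∈ F)

lemma chf_inj : Function.Injective chf := by
  intro F G h
  ext n
  have := congrFun h n
  simpa [chf] using this

/-- one-step derivative of a family -/
def famDeriv (𝒞 : Set (Finset ℕ)) : Set (Finset ℕ) :=
  {F | ∀ N : ℕ, ∃ n > N, insert n F ∈ 𝒞}

lemma famDeriv_subset {𝒞 : Set (Finset ℕ)} (h : IsHereditary 𝒞) : famDeriv 𝒞 ⊆ 𝒞 := by
  intro F hF
  obtain ⟨n, -, hn⟩ := hF 0
  exact h _ hn F (Finset.subset_insert _ _)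

/-- closure in Cantor space via cylinders -/
lemma mem_closure_iff_cyl {S : Set (ℕ → Bool)} {x : ℕ → Bool} :
    x ∈ closure S ↔ ∀ M : ℕ, ∃ y ∈ S, ∀ i ≤ M, y i = x i := by
  constructor
  · intro hx M
    rw [mem_closure_iff] at hx
    have hU : IsOpen (⋂ i ∈ Finset.range (M + 1), {y : ℕ → Bool | y i = x i}) := by
      refine isOpen_biInter_finset fun i _ => ?_
      have hc : Continuous (fun y : ℕ → Bool => y i) := continuous_apply i
      exact hc.isOpen_preimage {x i} (isOpen_discrete _)
    have hxU : x ∈ ⋂ i ∈ Finset.range (M + 1), {y : ℕ → Bool | y i = x i} := by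
      simp
    obtain ⟨y, hyU, hyS⟩ := hx _ hU hxU
    refine ⟨y, hyS, fun i hi => ?_⟩
    simp only [Set.mem_iInter] at hyU
    exact hyU i (Finset.mem_range.2 (Nat.lt_succ_of_le hi))
  · intro h
    choose y hyS hya using h
    refine mem_closure_of_tendsto (f := y) (b := Filter.atTop) ?_ ?_
    · rw [tendsto_pi_nhds]
      intro i
      refine Filter.Tendsto.congr' ?_ (tendsto_const_nhds (x := x i))
      filter_upwards [Filter.eventually_ge_atTop i] with M hM
      exact (hya M i hM).symm
    · exact Filter.Eventually.of_forall hyS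

lemma le_sup_of_mem {F : Finset ℕ} {a : ℕ} (h : a ∈ F) : a ≤ F.sup id :=
  Finset.le_sup (f := id) h

lemma charImage_eq_image : ∀ 𝒞 : Set (Finset ℕ), charImage 𝒞 = chf '' 𝒞 := fun _ => rfl

/-- Key topological lemma: the derived set of charImage of a closed hereditary family. -/
lemma derivedSet_charImage {𝒞 : Set (Finset ℕ)} (hher : IsHereditary 𝒞)
    (hcl : IsClosed (charImage 𝒞)) :
    {x : ℕ → Bool | x ∈ closure (charImage 𝒞 \ {x})} = charImage (famDeriv 𝒞) := by
  ext x
  simp only [Set.mem_setOf_eq]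
  constructor
  · intro hx
    have hxB : x ∈ charImage 𝒞 :=
      closure_minimal (fun y hy => hy.1) hcl hx
    obtain ⟨F, hF, rfl⟩ := hxB
    refine ⟨F, ?_, rfl⟩
    intro N
    rw [mem_closure_iff_cyl] at hx
    obtain ⟨y, ⟨hyB, hyne⟩, hya⟩ := hx (max N (F.sup id))
    obtain ⟨G, hG, rfl⟩ := hyB
    have hFG : F ⊆ G := by
      intro i hi
      have h1 : i ≤ max N (F.sup id) := le_trans (le_sup_of_mem hi) (le_max_right _ _)
      have := hya i h1
      simp only [decide_eq_decide] at this
      exact this.mpr hi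
    have hne : G ≠ F := fun h => hyne (by simp [h])
    obtain ⟨n, hnG, hnF⟩ := Finset.exists_of_ssubset (lt_of_le_of_ne hFG (Ne.symm hne))
    have hn : max N (F.sup id) < n := by
      by_contra h
      push_neg at h
      have := hya n h
      simp only [decide_eq_decide] at this
      exact hnF (this.mp hnG)
    refine ⟨n, lt_of_le_of_lt (le_max_left _ _) hn, ?_⟩
    exact hher _ hG _ (Finset.insert_subset hnG hFG)
  · rintro ⟨F, hF, rfl⟩
    rw [mem_closure_iff_cyl]
    intro M
    obtain ⟨n, hn, hmem⟩ := hF (max M (F.sup id))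
    have hnF : n ∉ F := fun h => absurd (le_trans (le_sup_of_mem h) (le_max_right _ _)) (not_le.2 hn)
    refine ⟨(fun (H : Finset ℕ) (k : ℕ) => decide (k ∈ H)) (insert n F), ⟨⟨insert n F, hmem, rfl⟩, ?_⟩, ?_⟩
    · intro h
      simp only [Set.mem_singleton_iff] at h
      have : insert n F = F := by
        ext i; have := congrFun h i
        simpa [decide_eq_decide] using this
      exact hnF (this ▸ Finset.mem_insert_self n F)
    · intro i hi
      have hin : i ≠ n := by
        intro h; subst h; exact absurd (le_trans hi (le_max_left _ _)) (not_le.2 hn)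
      simp [Finset.mem_insert, hin]


/-- invariant carried through the induction -/
def Good (𝒞 : Set (Finset ℕ)) : Prop :=
  IsHereditary 𝒞 ∧ IsSpreading 𝒞 ∧ IsClosed (charImage 𝒞)

lemma hereditary_famDeriv {𝒞 : Set (Finset ℕ)} (h : IsHereditary 𝒞) :
    IsHereditary (famDeriv 𝒞) := by
  intro F hF G hGF
  intro N
  obtain ⟨n, hn, hmem⟩ := hF N
  exact ⟨n, hn, h _ hmem _ (Finset.insert_subset_insert _ hGF)⟩

lemma spreading_famDeriv {𝒞 : Set (Finset ℕ)} (hher : IsHereditary 𝒞)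
    (hspr : IsSpreading 𝒞) : IsSpreading (famDeriv 𝒞) := by
  intro F hF f hmono hle
  intro N
  obtain ⟨m, hm, hmem⟩ := hF (max (max N ((F.image f).sup id)) (F.sup id))
  have hNm : N < m := by
    have := le_max_left N ((F.image f).sup id)
    have := le_max_left (max N ((F.image f).sup id)) (F.sup id)
    omega
  have hsupm : F.sup id < m := by
    have := le_max_right (max N ((F.image f).sup id)) (F.sup id)
    omega
  have himgm : (F.image f).sup id < m := by
    have := le_max_right N ((F.image f).sup id)
    have := le_max_left (max N ((F.image f).sup id)) (F.sup id)
    omega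
  have hmF : m ∉ F := fun h => absurd (le_sup_of_mem h) (not_le.2 hsupm)
  set g : ℕ → ℕ := fun p => if p = m then m else f p with hg
  have hgF : ∀ p ∈ F, g p = f p := by
    intro p hp
    simp only [hg]
    exact if_neg (fun h : p = m => hmF (h ▸ hp))
  have himg : (insert m F).image g = insert m (F.image f) := by
    rw [Finset.image_insert]
    have : g m = m := by simp [hg]
    rw [this]
    congr 1
    exact Finset.image_congr (fun p hp => hgF p hp)
  have hkey : (insert m F).image g ∈ 𝒞 := by
    apply hspr _ hmem
    · intro p hp q hq hpq
      rcases Finset.mem_insert.1 hp with hp' | hp'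
      · rcases Finset.mem_insert.1 hq with hq' | hq'
        · omega
        · have := le_sup_of_mem hq'
          omega
      · rcases Finset.mem_insert.1 hq with hq' | hq'
        · have h1 : f p ≤ (F.image f).sup id := le_sup_of_mem (Finset.mem_image_of_mem f hp')
          rw [hgF p hp']
          simp only [hg, if_pos hq']
          omega
        · rw [hgF p hp', hgF q hq']
          exact hmono p hp' q hq' hpq
    · intro p hp
      rcases Finset.mem_insert.1 hp with hp' | hp'
      · subst hp'; simp [hg]
      · rw [hgF p hp']
        exact hle p hp'
  rw [himg] at hkey
  exact ⟨m, hNm, hkey⟩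

lemma closed_charImage_famDeriv {𝒞 : Set (Finset ℕ)} (hher : IsHereditary 𝒞)
    (hcl : IsClosed (charImage 𝒞)) : IsClosed (charImage (famDeriv 𝒞)) := by
  refine isClosed_of_closure_subset ?_
  intro x hx
  have hxB : x ∈ charImage 𝒞 := by
    have hsub : charImage (famDeriv 𝒞) ⊆ charImage 𝒞 :=
      Set.image_mono (famDeriv_subset hher)
    exact hcl.closure_subset (closure_mono hsub hx)
  obtain ⟨F, hF, rfl⟩ := hxB
  refine ⟨F, ?_, rfl⟩
  intro N
  rw [mem_closure_iff_cyl] at hx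
  obtain ⟨y, hyD, hya⟩ := hx (max N (F.sup id))
  obtain ⟨G, hG, rfl⟩ := hyD
  have hFG : F ⊆ G := by
    intro i hi
    have h1 : i ≤ max N (F.sup id) := le_trans (le_sup_of_mem hi) (le_max_right _ _)
    have := hya i h1
    simp only [decide_eq_decide] at this
    exact this.mpr hi
  by_cases hGF : G = F
  · subst hGF
    exact hG N
  · obtain ⟨n, hnG, hnF⟩ := Finset.exists_of_ssubset (lt_of_le_of_ne hFG (Ne.symm hGF))
    have hn : max N (F.sup id) < n := by
      by_contra h
      push_neg at h
      have := hya n h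
      simp only [decide_eq_decide] at this
      exact hnF (this.mp hnG)
    refine ⟨n, lt_of_le_of_lt (le_max_left _ _) hn, ?_⟩
    exact hher _ (famDeriv_subset hher hG) _ (Finset.insert_subset hnG hFG)

lemma good_famDeriv {𝒞 : Set (Finset ℕ)} (h : Good 𝒞) : Good (famDeriv 𝒞) :=
  ⟨hereditary_famDeriv h.1, spreading_famDeriv h.1 h.2.1,
    closed_charImage_famDeriv h.1 h.2.2⟩

/-- transfinite iteration of the family derivative -/
def AIter (𝒜 : Set (Finset ℕ)) (o : Ordinal) : Set (Finset ℕ) :=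
  Ordinal.limitRecOn o 𝒜 (fun _ ih => famDeriv ih)
    (fun o _ ih => ⋂ (o' : Ordinal), ⋂ (h : o' < o), ih o' h)

lemma AIter_zero (𝒜 : Set (Finset ℕ)) : AIter 𝒜 0 = 𝒜 :=
  Ordinal.limitRecOn_zero _ _ _

lemma AIter_succ (𝒜 : Set (Finset ℕ)) (o : Ordinal) :
    AIter 𝒜 (o + 1) = famDeriv (AIter 𝒜 o) := by
  rw [Ordinal.add_one_eq_succ]
  exact Ordinal.limitRecOn_succ o _ _ _

lemma AIter_limit (𝒜 : Set (Finset ℕ)) {o : Ordinal} (ho : Order.IsSuccLimit o) :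
    AIter 𝒜 o = ⋂ (o' : Ordinal), ⋂ (_ : o' < o), AIter 𝒜 o' :=
  Ordinal.limitRecOn_limit o _ _ _ ho

lemma DIter_zero {S : Type*} (T : Set (List S)) : DIter T 0 = T :=
  Ordinal.limitRecOn_zero _ _ _

lemma DIter_succ {S : Type*} (T : Set (List S)) (o : Ordinal) :
    DIter T (o + 1) = Dtree (DIter T o) := by
  rw [Ordinal.add_one_eq_succ]
  exact Ordinal.limitRecOn_succ o _ _ _

lemma DIter_limit {S : Type*} (T : Set (List S)) {o : Ordinal} (ho : Order.IsSuccLimit o) :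
    DIter T o = ⋂ (o' : Ordinal), ⋂ (_ : o' < o), DIter T o' :=
  Ordinal.limitRecOn_limit o _ _ _ ho

lemma CBIter_zero (A : Set (ℕ → Bool)) : CBIter A 0 = A :=
  Ordinal.limitRecOn_zero _ _ _

lemma CBIter_succ (A : Set (ℕ → Bool)) (o : Ordinal) :
    CBIter A (o + 1) = { x | x ∈ closure (CBIter A o \ {x}) } := by
  rw [Ordinal.add_one_eq_succ]
  exact Ordinal.limitRecOn_succ o _ _ _

lemma CBIter_limit (A : Set (ℕ → Bool)) {o : Ordinal} (ho : Order.IsSuccLimit o) :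
    CBIter A o = ⋂ (o' : Ordinal), ⋂ (_ : o' < o), CBIter A o' :=
  Ordinal.limitRecOn_limit o _ _ _ ho

lemma charImage_iInter₂ {o : Ordinal} (h0 : 0 < o) (f : Ordinal → Set (Finset ℕ)) :
    charImage (⋂ (o' : Ordinal), ⋂ (_ : o' < o), f o') =
      ⋂ (o' : Ordinal), ⋂ (_ : o' < o), charImage (f o') := by
  ext x
  simp only [Set.mem_iInter]
  constructor
  · rintro ⟨F, hF, rfl⟩ o' ho'
    simp only [Set.mem_iInter] at hF
    exact ⟨F, hF o' ho', rfl⟩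
  · intro hx
    obtain ⟨F, hF, rfl⟩ := hx 0 h0
    refine ⟨F, ?_, rfl⟩
    simp only [Set.mem_iInter]
    intro o' ho'
    obtain ⟨G, hG, hEq⟩ := hx o' ho'
    have : G = F := chf_inj hEq
    exact this ▸ hG

lemma good_iInter₂ {o : Ordinal} (h0 : 0 < o) (f : Ordinal → Set (Finset ℕ))
    (hf : ∀ o' < o, Good (f o')) :
    Good (⋂ (o' : Ordinal), ⋂ (_ : o' < o), f o') := by
  refine ⟨?_, ?_, ?_⟩
  · intro F hF G hGF
    simp only [Set.mem_iInter] at hF ⊢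
    exact fun o' ho' => (hf o' ho').1 _ (hF o' ho') _ hGF
  · intro F hF g hmono hle
    simp only [Set.mem_iInter] at hF ⊢
    exact fun o' ho' => (hf o' ho').2.1 _ (hF o' ho') _ hmono hle
  · rw [charImage_iInter₂ h0]
    exact isClosed_iInter fun o' => isClosed_iInter fun ho' => (hf o' ho').2.2

lemma good_AIter {𝒜 : Set (Finset ℕ)} (h : Good 𝒜) : ∀ o, Good (AIter 𝒜 o) := by
  intro o
  induction o using Ordinal.limitRecOn with
  | zero => rw [AIter_zero]; exact h
  | add_one o ih =>
    rw [AIter_succ]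
    exact good_famDeriv ih
  | limit o ho ih =>
    rw [AIter_limit _ ho]
    exact good_iInter₂ ho.pos _ ih

lemma mem_famDeriv_of_insert {𝒞 : Set (Finset ℕ)} (hspr : IsSpreading 𝒞) {L : Finset ℕ} {x : ℕ}
    (hx : ∀ a ∈ L, a < x) (hmem : insert x L ∈ 𝒞) : L ∈ famDeriv 𝒞 := by
  intro N
  set n := max (N + 1) x with hn
  have hxL : x ∉ L := fun h => lt_irrefl x (hx x h)
  set f : ℕ → ℕ := fun p => if p = x then n else p with hf
  have hfL : ∀ p ∈ L, f p = p := by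
    intro p hp
    simp only [hf]
    exact if_neg (fun h : p = x => hxL (h ▸ hp))
  have himg : (insert x L).image f = insert n L := by
    rw [Finset.image_insert]
    have hfx : f x = n := by simp [hf]
    rw [hfx]
    congr 1
    rw [Finset.image_congr (g := id) (fun p hp => hfL p hp), Finset.image_id]
  have hkey : (insert x L).image f ∈ 𝒞 := by
    apply hspr _ hmem
    · intro p hp q hq hpq
      rcases Finset.mem_insert.1 hp with hp' | hp'
      · rcases Finset.mem_insert.1 hq with hq' | hq'
        · omega
        · have := hx q hq'
          omega
      · rcases Finset.mem_insert.1 hq with hq' | hq'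
        · rw [hfL p hp']
          simp only [hf, if_pos hq']
          have := hx p hp'
          omega
        · rw [hfL p hp', hfL q hq']
          exact hpq
    · intro p hp
      rcases Finset.mem_insert.1 hp with hp' | hp'
      · subst hp'; simp [hf, hn]
      · rw [hfL p hp']
  rw [himg] at hkey
  exact ⟨n, by omega, hkey⟩

lemma toFinset_append_singleton (l : List ℕ) (x : ℕ) :
    (l ++ [x]).toFinset = insert x l.toFinset := by
  ext a
  simp [List.toFinset_append, or_comm]

lemma Dtree_familyTree {𝒞 : Set (Finset ℕ)} (hher : IsHereditary 𝒞) (hspr : IsSpreading 𝒞) :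
    Dtree (familyTree 𝒞) = familyTree (famDeriv 𝒞) := by
  ext l
  constructor
  · rintro ⟨hne, x, hne', hch, hmem⟩
    unfold List.Chain' at hch
    rw [List.isChain_iff_pairwise, List.pairwise_append] at hch
    obtain ⟨hp1, -, hlt⟩ := hch
    have hltx : ∀ a ∈ l.toFinset, a < x := by
      intro a ha
      exact hlt a (List.mem_toFinset.1 ha) x (List.mem_singleton_self x)
    rw [toFinset_append_singleton] at hmem
    exact ⟨hne, List.isChain_iff_pairwise.2 hp1, mem_famDeriv_of_insert hspr hltx hmem⟩
  · rintro ⟨hne, hch, hmem⟩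
    obtain ⟨n, hn, hins⟩ := hmem (l.toFinset.sup id)
    refine ⟨hne, n, ?_, ?_, ?_⟩
    · simp
    · unfold List.Chain'
      rw [List.isChain_iff_pairwise, List.pairwise_append]
      refine ⟨List.isChain_iff_pairwise.1 hch, List.pairwise_singleton _ _, ?_⟩
      intro a ha b hb
      rw [List.mem_singleton] at hb
      subst hb
      have : a ≤ l.toFinset.sup id := le_sup_of_mem (List.mem_toFinset.2 ha)
      omega
    · rw [toFinset_append_singleton]
      exact hins

lemma familyTree_iInter₂ {o : Ordinal} (h0 : 0 < o) (f : Ordinal → Set (Finset ℕ)) :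
    familyTree (⋂ (o' : Ordinal), ⋂ (_ : o' < o), f o') =
      ⋂ (o' : Ordinal), ⋂ (_ : o' < o), familyTree (f o') := by
  ext l
  simp only [familyTree, Set.mem_iInter, Set.mem_setOf_eq]
  constructor
  · rintro ⟨hne, hch, hmem⟩ o' ho'
    exact ⟨hne, hch, hmem o' ho'⟩
  · intro h
    obtain ⟨hne, hch, -⟩ := h 0 h0
    exact ⟨hne, hch, fun o' ho' => (h o' ho').2.2⟩

lemma DIter_familyTree {𝒜 : Set (Finset ℕ)} (h : Good 𝒜) (o : Ordinal) :
    DIter (familyTree 𝒜) o = familyTree (AIter 𝒜 o) := by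
  induction o using Ordinal.limitRecOn with
  | zero => rw [DIter_zero, AIter_zero]
  | add_one o ih =>
    rw [DIter_succ, AIter_succ, ih]
    exact Dtree_familyTree (good_AIter h o).1 (good_AIter h o).2.1
  | limit o ho ih =>
    rw [DIter_limit _ ho, AIter_limit _ ho, familyTree_iInter₂ ho.pos]
    exact Set.iInter_congr fun o' => Set.iInter_congr fun ho' => ih o' ho'

lemma CBIter_charImage {𝒜 : Set (Finset ℕ)} (h : Good 𝒜) (o : Ordinal) :
    CBIter (charImage 𝒜) o = charImage (AIter 𝒜 o) := by
  induction o using Ordinal.limitRecOn with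
  | zero => rw [CBIter_zero, AIter_zero]
  | add_one o ih =>
    rw [CBIter_succ, AIter_succ, ih]
    exact derivedSet_charImage (good_AIter h o).1 (good_AIter h o).2.2
  | limit o ho ih =>
    rw [CBIter_limit _ ho, AIter_limit _ ho, charImage_iInter₂ ho.pos]
    exact Set.iInter_congr fun o' => Set.iInter_congr fun ho' => ih o' ho'

lemma familyTree_empty_iff {𝒞 : Set (Finset ℕ)} :
    familyTree 𝒞 = ∅ ↔ ∀ F ∈ 𝒞, F = ∅ := by
  constructor
  · intro h F hF
    by_contra hne
    have hcard : F.card ≠ 0 := fun hc => hne (Finset.card_eq_zero.1 hc)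
    have hlne : F.sort (· ≤ ·) ≠ [] := by
      intro hl
      have := Finset.length_sort (α := ℕ) (· ≤ ·) (s := F)
      rw [hl] at this
      simp at this
      exact hcard this.symm
    have : F.sort (· ≤ ·) ∈ familyTree 𝒞 := by
      refine ⟨hlne, List.isChain_iff_pairwise.2 (Finset.sortedLT_sort F).pairwise, ?_⟩
      rw [Finset.sort_toFinset]
      exact hF
    rw [h] at this
    exact this
  · intro h
    ext l
    simp only [Set.mem_empty_iff_false, iff_false]
    rintro ⟨hne, hch, hmem⟩
    have h1 : l.toFinset = ∅ := h _ hmem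
    have h2 : l.head hne ∈ l.toFinset := List.mem_toFinset.2 (List.head_mem hne)
    rw [h1] at h2
    exact absurd h2 (Finset.notMem_empty _)

lemma key_iff {𝒞 : Set (Finset ℕ)} (hher : IsHereditary 𝒞) (hspr : IsSpreading 𝒞) :
    familyTree 𝒞 = ∅ ↔ famDeriv 𝒞 = ∅ := by
  rw [familyTree_empty_iff]
  constructor
  · intro h
    ext F
    simp only [Set.mem_empty_iff_false, iff_false]
    intro hF
    obtain ⟨n, -, hmem⟩ := hF 0
    have := h _ hmem
    exact absurd this (Finset.insert_ne_empty _ _)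
  · intro h F hF
    by_contra hne
    obtain ⟨a, ha⟩ := Finset.nonempty_iff_ne_empty.2 hne
    have hsing : {a} ∈ 𝒞 := hher _ hF _ (Finset.singleton_subset_iff.2 ha)
    have : (∅ : Finset ℕ) ∈ famDeriv 𝒞 := by
      intro N
      set n := max (N + 1) a with hn
      have : ({a} : Finset ℕ).image (fun _ => n) ∈ 𝒞 := by
        apply hspr _ hsing
        · intro p hp q hq hpq
          rw [Finset.mem_singleton] at hp hq
          omega
        · intro p hp
          rw [Finset.mem_singleton] at hp
          omega
      rw [Finset.image_singleton] at this
      refine ⟨n, by omega, ?_⟩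
      simpa using this
    rw [h] at this
    exact this

end Aux

/-- for a hereditary, spreading, compact family `F` of finite subsets of
`ℕ`, the order of the associated tree equals the Cantor–Bendixson index of `F`. -/
theorem treeOrder_eq_CBIndex (𝒜 : Set (Finset ℕ))
    (hher : IsHereditary 𝒜) (hspr : IsSpreading 𝒜)
    (hcpt : IsCompact (charImage 𝒜)) :
    treeOrder (familyTree 𝒜) = CBIndex (charImage 𝒜) := by
  have hgood : Good 𝒜 := ⟨hher, hspr, hcpt.isClosed⟩
  unfold treeOrder CBIndex
  congr 1
  ext α
  simp only [Set.mem_setOf_eq]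
  rw [DIter_familyTree hgood, CBIter_charImage hgood, AIter_succ,
    key_iff (good_AIter hgood α).1 (good_AIter hgood α).2.1,
    charImage_eq_image, Set.image_eq_empty]
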